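/- Let T and B be bounded self-adjoint operators on a complex Hilbert space H, and let g : ℝ → ℂ be measurable with ∫_ℝ (1 + |p| + p²)|g(p)| dp < ∞. For a bounded self-adjoint operator A define Φ(A) := ∫_ℝ g(p) exp(ipA) dp and set D := ∫_ℝ ∫₀¹ i p g(p) exp(ip(1−u)T) B exp(ipuT) du dp (Bochner integrals in operator norm). Then for every real ε: ‖Φ(T + εB) − Φ(T) − ε D‖ ≤ ε² ‖B‖² ∫_ℝ p² |g(p)| dp. In particular ε ↦ Φ(T + εB) is differentiable at ε = 0 in operator norm with derivative D. (The first differential formula of the paper's proposition on differentials of the Fourier functional calculus, with g playing the role of the Fourier transform of f ∈ C^{2+}(ℝ), stated for bounded T.) -/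

import Mathlib

open MeasureTheory

variable {H : Type*} [NormedAddCommGroup H] [InnerProductSpace ℂ H] [CompleteSpace H]

/-- The Fourier functional calculus `Φ(A) = ∫_ℝ g(p) exp(ipA) dp`, with `g` playing the
role of the Fourier transform of `f ∈ C^{2+}(ℝ)`. -/
noncomputable def fourierCalculus (g : ℝ → ℂ) (A : H →L[ℂ] H) : H →L[ℂ] H :=
  ∫ p : ℝ, g p • NormedSpace.exp ((Complex.I * (p : ℂ)) • A)

/-- The candidate first differential
`D = ∫_ℝ ∫₀¹ i p g(p) exp(ip(1−u)T) B exp(ipuT) du dp`. -/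
noncomputable def fourierCalculusDeriv (g : ℝ → ℂ) (T B : H →L[ℂ] H) : H →L[ℂ] H :=
  ∫ p : ℝ, ∫ u in Set.Icc (0:ℝ) 1,
    (Complex.I * (p : ℂ) * g p) •
      (NormedSpace.exp ((Complex.I * ((p * (1 - u) : ℝ) : ℂ)) • T) * B *
        NormedSpace.exp ((Complex.I * ((p * u : ℝ) : ℂ)) • T))

namespace FourierAux

open Complex NormedSpace

variable {H : Type*} [NormedAddCommGroup H] [InnerProductSpace ℂ H] [CompleteSpace H]

noncomputable instance instNormedAlgebraRatCLM : NormedAlgebra ℚ (H →L[ℂ] H) :=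
  NormedAlgebra.restrictScalars ℚ ℂ _

noncomputable def U (A : H →L[ℂ] H) (s : ℝ) : H →L[ℂ] H :=
  NormedSpace.exp ((Complex.I * (s : ℂ)) • A)

lemma U_eq_exp_real (A : H →L[ℂ] H) (s : ℝ) :
    U A s = NormedSpace.exp ((Complex.I * (s : ℂ)) • A) := by
  rfl

lemma U_mem_unitary {A : H →L[ℂ] H} (hA : IsSelfAdjoint A) (s : ℝ) :
    U A s ∈ unitary (H →L[ℂ] H) := by
  refine exp_mem_unitary_of_mem_skewAdjoint ?_
  rw [skewAdjoint.mem_iff]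
  simp [star_smul, hA.star_eq, Complex.star_def, map_mul, Complex.conj_I, Complex.conj_ofReal]

lemma norm_U_le_one {A : H →L[ℂ] H} (hA : IsSelfAdjoint A) (s : ℝ) : ‖U A s‖ ≤ 1 := by
  have h := CStarRing.norm_mul_mem_unitary (1 : H →L[ℂ] H) (U_mem_unitary hA s)
  rw [one_mul] at h
  rw [h, ContinuousLinearMap.one_def]
  exact ContinuousLinearMap.norm_id_le

lemma continuous_U (A : H →L[ℂ] H) : Continuous fun s : ℝ => U A s :=
  exp_continuous.comp ((continuous_const.mul Complex.continuous_ofReal).smul continuous_const)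

set_option linter.unusedSectionVars false in
lemma real_smul_I_smul (r s : ℝ) (A : H →L[ℂ] H) :
    r • ((Complex.I * (s : ℂ)) • A) = (Complex.I * ((s * r : ℝ) : ℂ)) • A := by
  rw [← smul_assoc]; congr 1; push_cast [Complex.real_smul]; ring

set_option linter.unusedSectionVars false in
lemma c_smul_real_smul (c : ℂ) (r : ℝ) (A : H →L[ℂ] H) :
    c • (r • A) = (c * r) • A := by
  rw [smul_comm, ← smul_assoc]; congr 1; push_cast [Complex.real_smul]; ring

lemma duhamel_general (X Y : H →L[ℂ] H) :
    NormedSpace.exp X - NormedSpace.exp Y =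
      ∫ u in (0:ℝ)..1, NormedSpace.exp ((1 - u) • Y) * (X - Y) * NormedSpace.exp (u • X) := by
  have hder : ∀ u ∈ Set.uIcc (0:ℝ) 1,
      HasDerivAt (fun u : ℝ => NormedSpace.exp ((1 - u) • Y) * NormedSpace.exp (u • X))
        (NormedSpace.exp ((1 - u) • Y) * (X - Y) * NormedSpace.exp (u • X)) u := by
    intro u _
    have hinner : HasDerivAt (fun u : ℝ => 1 - u) (-1) u := by
      simpa using (hasDerivAt_id u).const_sub 1
    have h1 : HasDerivAt (fun u : ℝ => NormedSpace.exp ((1 - u) • Y))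
        ((-1 : ℝ) • (NormedSpace.exp ((1 - u) • Y) * Y)) u :=
      (hasDerivAt_exp_smul_const (𝕂 := ℝ) Y (1 - u)).scomp u hinner
    have h2 : HasDerivAt (fun u : ℝ => NormedSpace.exp (u • X)) (NormedSpace.exp (u • X) * X) u :=
      hasDerivAt_exp_smul_const X u
    have h3 := h1.mul h2
    refine h3.congr_deriv ?_
    have hc : NormedSpace.exp (u • X) * X = X * NormedSpace.exp (u • X) :=
      (((Commute.refl X).smul_left u).exp_left).eq
    rw [hc]
    simp only [neg_one_smul]
    noncomm_ring
  have hcont : Continuous fun u : ℝ => NormedSpace.exp ((1 - u) • Y) * (X - Y) * NormedSpace.exp (u • X) := by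
    have e1 : Continuous fun u : ℝ => NormedSpace.exp ((1 - u) • Y) :=
      exp_continuous.comp ((continuous_const.sub continuous_id).smul continuous_const)
    have e2 : Continuous fun u : ℝ => NormedSpace.exp (u • X) :=
      exp_continuous.comp (continuous_id.smul continuous_const)
    exact (e1.mul continuous_const).mul e2
  have h := intervalIntegral.integral_eq_sub_of_hasDerivAt hder
    (hcont.intervalIntegrable 0 1)
  rw [h]
  norm_num [NormedSpace.exp_zero]

lemma duhamel (S T : H →L[ℂ] H) (s : ℝ) :
    U S s - U T s =
      ∫ u in (0:ℝ)..1,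
        U T (s * (1 - u)) * ((Complex.I * (s : ℂ)) • (S - T)) * U S (s * u) := by
  have h := duhamel_general ((Complex.I * (s:ℂ)) • S) ((Complex.I * (s:ℂ)) • T)
  rw [U_eq_exp_real, U_eq_exp_real, h]
  apply intervalIntegral.integral_congr
  intro u _
  simp only [U_eq_exp_real, real_smul_I_smul, ← smul_sub]

lemma norm_U_sub_U_le {S T : H →L[ℂ] H} (hS : IsSelfAdjoint S) (hT : IsSelfAdjoint T)
    (s : ℝ) : ‖U S s - U T s‖ ≤ |s| * ‖S - T‖ := by
  rw [duhamel]
  have h := intervalIntegral.norm_integral_le_of_norm_le_const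
    (a := (0:ℝ)) (b := 1) (C := |s| * ‖S - T‖)
    (f := fun u => U T (s * (1 - u)) * ((Complex.I * (s : ℂ)) • (S - T)) * U S (s * u)) ?_
  · simpa using h
  · intro u _
    rw [CStarRing.norm_mul_mem_unitary _ (U_mem_unitary hS _),
      CStarRing.norm_mem_unitary_mul _ (U_mem_unitary hT _), norm_smul]
    simp [abs_nonneg]

lemma key2 {T B : H →L[ℂ] H} (hT : IsSelfAdjoint T) (hB : IsSelfAdjoint B) (ε s : ℝ)
    (hS : IsSelfAdjoint (T + ε • B)) :
    ‖U (T + ε • B) s - U T s -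
        (Complex.I * (s : ℂ) * (ε : ℂ)) •
          ∫ u in (0:ℝ)..1, U T (s * (1 - u)) * B * U T (s * u)‖
      ≤ s ^ 2 * ε ^ 2 * ‖B‖ ^ 2 := by
  set S := T + ε • B with hSdef
  have hST : S - T = ε • B := by rw [hSdef]; abel
  have hM : (Complex.I * (s : ℂ)) • (S - T) = (Complex.I * (s : ℂ) * (ε : ℂ)) • B := by
    rw [hST, c_smul_real_smul]
  have h1 := duhamel S T s
  rw [hM] at h1
  have h2 : (Complex.I * (s : ℂ) * (ε : ℂ)) •
        ∫ u in (0:ℝ)..1, U T (s * (1 - u)) * B * U T (s * u)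
      = ∫ u in (0:ℝ)..1,
          U T (s * (1 - u)) * ((Complex.I * (s : ℂ) * (ε : ℂ)) • B) * U T (s * u) := by
    rw [← intervalIntegral.integral_smul]
    apply intervalIntegral.integral_congr
    intro u _
    simp [mul_smul_comm, smul_mul_assoc]
  have hcS : Continuous fun u : ℝ =>
      U T (s * (1 - u)) * ((Complex.I * (s : ℂ) * (ε : ℂ)) • B) * U S (s * u) := by
    have e1 : Continuous fun u : ℝ => U T (s * (1 - u)) :=
      (continuous_U T).comp (continuous_const.mul (continuous_const.sub continuous_id))
    have e2 : Continuous fun u : ℝ => U S (s * u) :=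
      (continuous_U S).comp (continuous_const.mul continuous_id)
    exact (e1.mul continuous_const).mul e2
  have hcT : Continuous fun u : ℝ =>
      U T (s * (1 - u)) * ((Complex.I * (s : ℂ) * (ε : ℂ)) • B) * U T (s * u) := by
    have e1 : Continuous fun u : ℝ => U T (s * (1 - u)) :=
      (continuous_U T).comp (continuous_const.mul (continuous_const.sub continuous_id))
    have e2 : Continuous fun u : ℝ => U T (s * u) :=
      (continuous_U T).comp (continuous_const.mul continuous_id)
    exact (e1.mul continuous_const).mul e2
  rw [sub_sub, ← sub_sub, h1, h2, ← intervalIntegral.integral_sub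
    (hcS.intervalIntegrable 0 1) (hcT.intervalIntegrable 0 1)]
  have h3 : ∀ u : ℝ,
      U T (s * (1 - u)) * ((Complex.I * (s : ℂ) * (ε : ℂ)) • B) * U S (s * u) -
        U T (s * (1 - u)) * ((Complex.I * (s : ℂ) * (ε : ℂ)) • B) * U T (s * u)
      = U T (s * (1 - u)) * ((Complex.I * (s : ℂ) * (ε : ℂ)) • B) *
          (U S (s * u) - U T (s * u)) := by
    intro u; exact (mul_sub _ _ _).symm
  have hb := intervalIntegral.norm_integral_le_of_norm_le_const
    (a := (0:ℝ)) (b := 1) (C := s ^ 2 * ε ^ 2 * ‖B‖ ^ 2)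
    (f := fun u => U T (s * (1 - u)) * ((Complex.I * (s : ℂ) * (ε : ℂ)) • B) * U S (s * u) -
      U T (s * (1 - u)) * ((Complex.I * (s : ℂ) * (ε : ℂ)) • B) * U T (s * u)) ?_
  · simpa using hb
  · intro u hu
    rw [Set.uIoc_of_le (by norm_num : (0:ℝ) ≤ 1)] at hu
    obtain ⟨hu0, hu1⟩ := hu
    simp only [h3]
    calc ‖U T (s * (1 - u)) * ((Complex.I * (s : ℂ) * (ε : ℂ)) • B) *
            (U S (s * u) - U T (s * u))‖
        ≤ ‖U T (s * (1 - u)) * ((Complex.I * (s : ℂ) * (ε : ℂ)) • B)‖ *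
            ‖U S (s * u) - U T (s * u)‖ := norm_mul_le _ _
      _ ≤ (|s| * |ε| * ‖B‖) * (|s * u| * (|ε| * ‖B‖)) := by
          apply mul_le_mul
          · rw [CStarRing.norm_mem_unitary_mul _ (U_mem_unitary hT _), norm_smul]
            simp [abs_nonneg, mul_assoc]
          · have := norm_U_sub_U_le hS hT (s * u)
            rw [hST, norm_smul, Real.norm_eq_abs] at this
            exact this
          · exact norm_nonneg _
          · positivity
      _ = (s ^ 2 * ε ^ 2 * ‖B‖ ^ 2) * |u| := by
          rw [abs_mul, ← _root_.sq_abs s, ← _root_.sq_abs ε]; ring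
      _ ≤ s ^ 2 * ε ^ 2 * ‖B‖ ^ 2 := by
          have hua : |u| ≤ 1 := by rw [abs_of_pos hu0]; exact hu1
          exact mul_le_of_le_one_right (by positivity) hua

end FourierAux

attribute [local instance 101] secondCountableTopologyEither_of_left

set_option maxHeartbeats 1000000 in
open FourierAux Complex in
/-- The first differential of the Fourier functional calculus: for bounded self-adjoint
`T, B` and `g` with `∫ (1+|p|+p²)|g(p)| dp < ∞`, one has
`‖Φ(T+εB) − Φ(T) − εD‖ ≤ ε²‖B‖² ∫ p²|g(p)| dp` for every real `ε`; in particular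
`ε ↦ Φ(T+εB)` is differentiable at `ε = 0` in operator norm with derivative `D`. -/
theorem fourierCalculus_first_differential
    (T B : H →L[ℂ] H) (hT : IsSelfAdjoint T) (hB : IsSelfAdjoint B)
    (g : ℝ → ℂ) (hgm : Measurable g)
    (hgint : Integrable fun p : ℝ => (1 + |p| + p ^ 2) * ‖g p‖) :
    (∀ ε : ℝ,
      ‖fourierCalculus g (T + ε • B) - fourierCalculus g T -
          ε • fourierCalculusDeriv g T B‖ ≤
        ε ^ 2 * ‖B‖ ^ 2 * ∫ p : ℝ, p ^ 2 * ‖g p‖) ∧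
    HasDerivAt (fun ε : ℝ => fourierCalculus g (T + ε • B)) (fourierCalculusDeriv g T B) 0 := by
  -- basic integrability facts about `g`
  have hg1 : Integrable fun p : ℝ => ‖g p‖ := by
    refine hgint.mono' hgm.norm.aestronglyMeasurable ?_
    filter_upwards with p
    rw [Real.norm_eq_abs, _root_.abs_of_nonneg (norm_nonneg _)]
    nlinarith [norm_nonneg (g p), abs_nonneg p, sq_nonneg p]
  have hgabs : Integrable fun p : ℝ => |p| * ‖g p‖ := by
    refine hgint.mono' ((measurable_abs.mul hgm.norm).aestronglyMeasurable) ?_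
    filter_upwards with p
    rw [Real.norm_eq_abs, _root_.abs_of_nonneg (by positivity)]
    nlinarith [norm_nonneg (g p), abs_nonneg p, sq_nonneg p]
  have hg2 : Integrable fun p : ℝ => p ^ 2 * ‖g p‖ := by
    refine hgint.mono' (((measurable_id.pow_const 2).mul hgm.norm).aestronglyMeasurable) ?_
    filter_upwards with p
    rw [Real.norm_eq_abs, _root_.abs_of_nonneg (by positivity)]
    nlinarith [norm_nonneg (g p), abs_nonneg p, sq_nonneg p]
  -- the inner interval integral
  set K : ℝ → H →L[ℂ] H :=
    fun p => ∫ u in (0:ℝ)..1, U T (p * (1 - u)) * B * U T (p * u) with hKdef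
  have hKcont : Continuous K := by
    apply intervalIntegral.continuous_parametric_intervalIntegral_of_continuous'
    have e1 : Continuous fun q : ℝ × ℝ => U T (q.1 * (1 - q.2)) :=
      (continuous_U T).comp (continuous_fst.mul (continuous_const.sub continuous_snd))
    have e2 : Continuous fun q : ℝ × ℝ => U T (q.1 * q.2) :=
      (continuous_U T).comp (continuous_fst.mul continuous_snd)
    exact (e1.mul continuous_const).mul e2
  have hKnorm : ∀ p, ‖K p‖ ≤ ‖B‖ := by
    intro p
    have h := intervalIntegral.norm_integral_le_of_norm_le_const
      (a := (0:ℝ)) (b := 1) (C := ‖B‖)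
      (f := fun u => U T (p * (1 - u)) * B * U T (p * u)) ?_
    · simpa using h
    · intro u _
      rw [CStarRing.norm_mul_mem_unitary _ (U_mem_unitary hT _),
        CStarRing.norm_mem_unitary_mul _ (U_mem_unitary hT _)]
  -- rewrite the derivative as an integral of `K`
  have hD_eq : fourierCalculusDeriv g T B
      = ∫ p : ℝ, (Complex.I * (p : ℂ) * g p) • K p := by
    rw [fourierCalculusDeriv]
    congr 1
    funext p
    rw [integral_smul, hKdef]
    congr 1
    rw [MeasureTheory.integral_Icc_eq_integral_Ioc,
      ← intervalIntegral.integral_of_le (zero_le_one)]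
    rfl
  -- integrands
  have hUint : ∀ A : H →L[ℂ] H, IsSelfAdjoint A →
      Integrable fun p : ℝ => g p • U A p := by
    intro A hA
    refine hg1.mono'
      (hgm.aestronglyMeasurable.smul (continuous_U A).aestronglyMeasurable) ?_
    filter_upwards with p
    rw [norm_smul]
    calc ‖g p‖ * ‖U A p‖ ≤ ‖g p‖ * 1 :=
          mul_le_mul_of_nonneg_left (norm_U_le_one hA p) (norm_nonneg _)
      _ = ‖g p‖ := mul_one _
  have hf3int : Integrable fun p : ℝ => (Complex.I * (p : ℂ) * g p) • K p := by
    refine (hgabs.const_mul ‖B‖).mono'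
      (((measurable_const.mul Complex.measurable_ofReal).mul hgm).aestronglyMeasurable.smul
        hKcont.aestronglyMeasurable) ?_
    filter_upwards with p
    rw [norm_smul]
    calc ‖Complex.I * (p : ℂ) * g p‖ * ‖K p‖
        ≤ ‖Complex.I * (p : ℂ) * g p‖ * ‖B‖ :=
          mul_le_mul_of_nonneg_left (hKnorm p) (norm_nonneg _)
      _ = ‖B‖ * (|p| * ‖g p‖) := by
          simp [norm_mul, Complex.norm_real]; ring
  have hC0 : 0 ≤ ∫ p : ℝ, p ^ 2 * ‖g p‖ :=
    integral_nonneg fun p => by positivity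
  -- the main estimate, for each ε
  have hbound : ∀ ε : ℝ,
      ‖fourierCalculus g (T + ε • B) - fourierCalculus g T -
          ε • fourierCalculusDeriv g T B‖ ≤
        ε ^ 2 * ‖B‖ ^ 2 * ∫ p : ℝ, p ^ 2 * ‖g p‖ := by
    intro ε
    have hεB : IsSelfAdjoint (ε • B) := by
      rw [IsSelfAdjoint, star_smul, star_trivial, hB.star_eq]
    have hS : IsSelfAdjoint (T + ε • B) := hT.add hεB
    have hpt : ∀ p : ℝ,
        g p • U (T + ε • B) p - g p • U T p -
            ε • ((Complex.I * (p : ℂ) * g p) • K p)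
          = g p • (U (T + ε • B) p - U T p - (Complex.I * (p : ℂ) * (ε : ℂ)) • K p) := by
      intro p
      rw [smul_sub, smul_sub, smul_smul]
      congr 1
      rw [smul_comm, c_smul_real_smul]
      congr 1
      ring
    have hi1 := hUint _ hS
    have hi2 := hUint _ hT
    have hi3 : Integrable fun p : ℝ => ε • ((Complex.I * (p : ℂ) * g p) • K p) :=
      hf3int.smul ε
    have hi12 : Integrable fun p : ℝ => g p • U (T + ε • B) p - g p • U T p := hi1.sub hi2
    have hi123 : Integrable fun p : ℝ =>
        g p • U (T + ε • B) p - g p • U T p - ε • ((Complex.I * (p : ℂ) * g p) • K p) :=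
      hi12.sub hi3
    have e1 : ∫ p : ℝ, (g p • U (T + ε • B) p - g p • U T p -
            ε • ((Complex.I * (p : ℂ) * g p) • K p))
        = ((∫ p : ℝ, g p • U (T + ε • B) p) - ∫ p : ℝ, g p • U T p) -
            ∫ p : ℝ, ε • ((Complex.I * (p : ℂ) * g p) • K p) := by
      rw [integral_sub hi12 hi3, integral_sub hi1 hi2]
    have hrw : fourierCalculus g (T + ε • B) - fourierCalculus g T -
          ε • fourierCalculusDeriv g T B
        = ∫ p : ℝ, g p • (U (T + ε • B) p - U T p -
            (Complex.I * (p : ℂ) * (ε : ℂ)) • K p) := by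
      rw [hD_eq, ← integral_smul]
      rw [show fourierCalculus g (T + ε • B) = ∫ p : ℝ, g p • U (T + ε • B) p from rfl,
        show fourierCalculus g T = ∫ p : ℝ, g p • U T p from rfl]
      rw [← e1]
      congr 1
      funext p
      exact hpt p
    rw [hrw]
    calc ‖∫ p : ℝ, g p • (U (T + ε • B) p - U T p -
            (Complex.I * (p : ℂ) * (ε : ℂ)) • K p)‖
        ≤ ∫ p : ℝ, ‖g p • (U (T + ε • B) p - U T p -
            (Complex.I * (p : ℂ) * (ε : ℂ)) • K p)‖ := norm_integral_le_integral_norm _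
      _ ≤ ∫ p : ℝ, ε ^ 2 * ‖B‖ ^ 2 * (p ^ 2 * ‖g p‖) := by
          refine integral_mono ?_ (hg2.const_mul _) ?_
          · have hi : Integrable fun p : ℝ =>
                g p • (U (T + ε • B) p - U T p - (Complex.I * (p : ℂ) * (ε : ℂ)) • K p) := by
              refine hi123.congr ?_
              filter_upwards with p
              exact hpt p
            exact hi.norm
          · intro p
            simp only [norm_smul]
            calc ‖g p‖ * ‖U (T + ε • B) p - U T p -
                    (Complex.I * (p : ℂ) * (ε : ℂ)) • K p‖
                ≤ ‖g p‖ * (p ^ 2 * ε ^ 2 * ‖B‖ ^ 2) :=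
                  mul_le_mul_of_nonneg_left (key2 hT hB ε p hS) (norm_nonneg _)
              _ = ε ^ 2 * ‖B‖ ^ 2 * (p ^ 2 * ‖g p‖) := by ring
      _ = ε ^ 2 * ‖B‖ ^ 2 * ∫ p : ℝ, p ^ 2 * ‖g p‖ := integral_const_mul _ _
  refine ⟨hbound, ?_⟩
  rw [hasDerivAt_iff_isLittleO]
  have hbig : (fun ε : ℝ => fourierCalculus g (T + ε • B) -
        fourierCalculus g (T + (0:ℝ) • B) - (ε - 0) • fourierCalculusDeriv g T B)
      =O[nhds 0] fun ε : ℝ => ε ^ 2 := by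
    refine Asymptotics.IsBigO.of_bound (‖B‖ ^ 2 * ∫ p : ℝ, p ^ 2 * ‖g p‖) ?_
    filter_upwards with ε
    have h := hbound ε
    rw [zero_smul, add_zero] at *
    rw [sub_zero]
    calc ‖fourierCalculus g (T + ε • B) - fourierCalculus g T -
            ε • fourierCalculusDeriv g T B‖
        ≤ ε ^ 2 * ‖B‖ ^ 2 * ∫ p : ℝ, p ^ 2 * ‖g p‖ := h
      _ = ‖B‖ ^ 2 * (∫ p : ℝ, p ^ 2 * ‖g p‖) * ‖ε ^ 2‖ := by
          rw [Real.norm_eq_abs, _root_.abs_of_nonneg (sq_nonneg ε)]; ring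
  have hlit : (fun ε : ℝ => ε ^ 2) =o[nhds 0] fun ε : ℝ => ε :=
    Asymptotics.isLittleO_pow_id (by norm_num)
  have := hbig.trans_isLittleO hlit
  simpa using this
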